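/- The Deterministic Weighted Majority Algorithm run with N experts and learning rate η = 1/2 makes at most 3(min_{i∈[N]} M_i + log₂ N) mistakes, where M_i is the number of mistakes made by expert i. -/

import Mathlib

open Finset

/-- The Deterministic Weighted Majority Algorithm run with `N` experts and learning rate
`η = 1/2` (each erring expert's weight is halved) makes at most
`3 (min_i M_i + log₂ N)` mistakes, where `M_i` is the number of mistakes of expert `i`. -/
theorem stmt1 (N T : ℕ) (hN : 1 ≤ N)
    (experts : Fin N → ℕ → Bool) (labels : ℕ → Bool)
    (w : Fin N → ℕ → ℝ)
    (hw0 : ∀ i, w i 0 = 1)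
    (hwstep : ∀ i t, w i (t + 1) = if experts i t ≠ labels t then w i t / 2 else w i t)
    (pred : ℕ → Bool)
    (hpred : ∀ t, pred t =
      decide ((∑ i ∈ univ.filter (fun i : Fin N => experts i t = false), w i t) ≤
        ∑ i ∈ univ.filter (fun i : Fin N => experts i t = true), w i t)) :
    (∑ t ∈ range T, if pred t ≠ labels t then (1 : ℝ) else 0) ≤
      3 * ((univ.inf' (univ_nonempty_iff.mpr ⟨⟨0, hN⟩⟩)
          (fun i => ∑ t ∈ range T, if experts i t ≠ labels t then (1 : ℝ) else 0)) +
        Real.logb 2 N) := by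
  classical
  have hne : (univ : Finset (Fin N)).Nonempty := univ_nonempty_iff.mpr ⟨⟨0, hN⟩⟩
  have hwt : ∀ i t, w i t = (1/2 : ℝ) ^ (((range t).filter fun s => experts i s ≠ labels s).card) := by
    intro i t
    induction t with
    | zero => simp [hw0]
    | succ t ih =>
      rw [hwstep, range_add_one, filter_insert]
      by_cases h : experts i t ≠ labels t
      · rw [if_pos h, if_pos h, card_insert_of_notMem (by simp), ih, pow_succ]
        ring
      · rw [if_neg h, if_neg h, ih]
  have hwpos : ∀ i t, 0 < w i t := by
    intro i t; rw [hwt]; positivity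
  set W : ℕ → ℝ := fun t => ∑ i, w i t with hW
  have hWpos : ∀ t, 0 < W t := fun t => Finset.sum_pos (fun i _ => hwpos i t) hne
  have hW0 : W 0 = N := by simp [hW, hw0]
  have hstep : ∀ t, (pred t ≠ labels t → W (t+1) ≤ 3/4 * W t) ∧ W (t+1) ≤ W t := by
    intro t
    set A := ∑ i ∈ univ.filter (fun i : Fin N => experts i t ≠ labels t), w i t with hA
    set B := ∑ i ∈ univ.filter (fun i : Fin N => ¬ (experts i t ≠ labels t)), w i t with hB
    have hsplit : W (t+1) = A / 2 + B := by
      simp only [hW]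
      rw [← sum_filter_add_sum_filter_not univ (fun i : Fin N => experts i t ≠ labels t)
            (fun i => w i (t+1)), hA, hB, sum_div]
      congr 1
      · exact sum_congr rfl fun i hi => by rw [hwstep, if_pos (mem_filter.mp hi).2]
      · exact sum_congr rfl fun i hi => by rw [hwstep, if_neg (mem_filter.mp hi).2]
    have hWt : W t = A + B :=
      (sum_filter_add_sum_filter_not univ (fun i : Fin N => experts i t ≠ labels t)
        (fun i => w i t)).symm
    have hApos : 0 ≤ A := sum_nonneg fun i _ => (hwpos i t).le
    constructor
    · intro hm
      have hBA : B ≤ A := by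
        cases hl : labels t with
        | false =>
          have hpt : pred t = true := by
            cases hp : pred t
            · exact absurd (by rw [hp, hl]) hm
            · rfl
          have hle : (∑ i ∈ univ.filter (fun i : Fin N => experts i t = false), w i t) ≤
              ∑ i ∈ univ.filter (fun i : Fin N => experts i t = true), w i t := by
            have := (hpred t).symm.trans hpt
            exact of_decide_eq_true this
          have h1 : univ.filter (fun i : Fin N => experts i t ≠ labels t)
              = univ.filter (fun i : Fin N => experts i t = true) := by
            apply filter_congr; intro i _; simp [hl]
          have h2 : univ.filter (fun i : Fin N => ¬ (experts i t ≠ labels t))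
              = univ.filter (fun i : Fin N => experts i t = false) := by
            apply filter_congr; intro i _; simp [hl]
          rw [hA, hB, h1, h2]; exact hle
        | true =>
          have hpt : pred t = false := by
            cases hp : pred t
            · rfl
            · exact absurd (by rw [hp, hl]) hm
          have hlt : (∑ i ∈ univ.filter (fun i : Fin N => experts i t = true), w i t) <
              ∑ i ∈ univ.filter (fun i : Fin N => experts i t = false), w i t := by
            have := (hpred t).symm.trans hpt
            have := of_decide_eq_false this
            linarith [not_le.mp this]
          have h1 : univ.filter (fun i : Fin N => experts i t ≠ labels t)
              = univ.filter (fun i : Fin N => experts i t = false) := by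
            apply filter_congr; intro i _; simp [hl]
          have h2 : univ.filter (fun i : Fin N => ¬ (experts i t ≠ labels t))
              = univ.filter (fun i : Fin N => experts i t = true) := by
            apply filter_congr; intro i _; simp [hl]
          rw [hA, hB, h1, h2]; exact hlt.le
      rw [hsplit, hWt]; linarith
    · rw [hsplit, hWt]; linarith
  have hbound : ∀ t, W t ≤ N * (3/4 : ℝ) ^ (((range t).filter fun s => pred s ≠ labels s).card) := by
    intro t
    induction t with
    | zero => simp [hW0]
    | succ t ih =>
      rw [range_add_one, filter_insert]
      by_cases h : pred t ≠ labels t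
      · rw [if_pos h, card_insert_of_notMem (by simp), pow_succ]
        calc W (t+1) ≤ 3/4 * W t := (hstep t).1 h
          _ ≤ 3/4 * (N * (3/4 : ℝ) ^ (((range t).filter fun s => pred s ≠ labels s).card)) := by
              linarith
          _ = N * ((3/4 : ℝ) ^ (((range t).filter fun s => pred s ≠ labels s).card) * (3/4)) := by
              ring
      · rw [if_neg h]; exact le_trans (hstep t).2 ih
  obtain ⟨i0, _, hi0⟩ := exists_mem_eq_inf' hne
    (fun i => ∑ t ∈ range T, if experts i t ≠ labels t then (1 : ℝ) else 0)
  set M0 : ℕ := ((range T).filter fun s => experts i0 s ≠ labels s).card with hM0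
  set m : ℕ := ((range T).filter fun s => pred s ≠ labels s).card with hm
  have key : (1/2 : ℝ) ^ M0 ≤ N * (3/4 : ℝ) ^ m := by
    have h1 : w i0 T ≤ W T :=
      single_le_sum (f := fun i => w i T) (fun i _ => (hwpos i T).le) (mem_univ i0)
    rw [hwt] at h1
    exact h1.trans (hbound T)
  have hsum1 : (∑ t ∈ range T, if pred t ≠ labels t then (1 : ℝ) else 0) = (m : ℝ) := by
    rw [sum_boole]
  have hsum2 : (∑ t ∈ range T, if experts i0 t ≠ labels t then (1 : ℝ) else 0) = (M0 : ℝ) := by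
    rw [sum_boole]
  rw [hsum1, hi0]
  simp only [hsum2]
  -- take logs
  have hN1 : (1:ℝ) ≤ (N:ℝ) := by exact_mod_cast hN
  have hlogkey : Real.log ((1/2 : ℝ) ^ M0) ≤ Real.log ((N:ℝ) * (3/4 : ℝ) ^ m) :=
    Real.log_le_log (by positivity) key
  rw [Real.log_pow, Real.log_mul (by positivity) (by positivity), Real.log_pow] at hlogkey
  have hhalf : Real.log (1/2 : ℝ) = - Real.log 2 := by
    rw [one_div, Real.log_inv]
  have h34 : Real.log (3/4 : ℝ) = Real.log 3 - Real.log 4 := Real.log_div (by norm_num) (by norm_num)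
  have h2 : Real.log 2 ≤ 3 * Real.log (4/3 : ℝ) := by
    have h : Real.log 2 ≤ Real.log ((4/3 : ℝ) ^ (3:ℕ)) :=
      Real.log_le_log (by norm_num) (by norm_num)
    rw [Real.log_pow] at h
    push_cast at h
    linarith
  have h43 : Real.log (4/3 : ℝ) = Real.log 4 - Real.log 3 := Real.log_div (by norm_num) (by norm_num)
  have hlog2 : 0 < Real.log 2 := Real.log_pos (by norm_num)
  rw [Real.logb, ← mul_le_mul_iff_left₀ hlog2]
  have hmn : (0:ℝ) ≤ (m:ℝ) := Nat.cast_nonneg m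
  have hM0n : (0:ℝ) ≤ (M0:ℝ) := Nat.cast_nonneg M0
  have hmain : (m:ℝ) * Real.log (4/3) ≤ (M0:ℝ) * Real.log 2 + Real.log N := by
    rw [hhalf] at hlogkey
    rw [h43]; rw [h34] at hlogkey
    nlinarith
  have hmm : (m:ℝ) * Real.log 2 ≤ 3 * ((m:ℝ) * Real.log (4/3)) := by
    nlinarith
  have hexp : 3 * ((M0:ℝ) + Real.log N / Real.log 2) * Real.log 2
      = 3 * ((M0:ℝ) * Real.log 2 + Real.log N) := by
    field_simp
  rw [hexp]
  nlinarith
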